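/- Let c be a closure operator on subsets of a type α and define A ⫶a_C B iff c(A∪C) ∩ c(B∪C) = c(C). Then ⫶a is perfectly trivial, i.e., A ⫶a_C B implies A ⫶a_{C'} B for every C' ⊇ C, if and only if the lattice of closed sets is distributive, i.e., for all closed sets A, B, C one has c(A∪C) ∩ c(B∪C) = c((A∩B)∪C). -/
import Mathlib


/-- The relation `⫶a`: `A ⫶a_C B` iff `c(A∪C) ∩ c(B∪C) = c(C)`. -/
def aInd {α : Type*} (c : Set α → Set α) (A C B : Set α) : Prop :=
  c (A ∪ C) ∩ c (B ∪ C) = c C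

/-- Exercise on distributivity: `⫶a` is perfectly trivial iff
the lattice of closed sets is distributive. -/
theorem stmt_14 {α : Type*} (c : Set α → Set α)
    (cmono : ∀ A B : Set α, A ⊆ B → c A ⊆ c B)
    (cext : ∀ A : Set α, A ⊆ c A)
    (cidem : ∀ A : Set α, c (c A) = c A) :
    (∀ A B C C' : Set α, aInd c A C B → C ⊆ C' → aInd c A C' B) ↔
    (∀ A B C : Set α, c A = A → c B = B → c C = C →
      c (A ∪ C) ∩ c (B ∪ C) = c ((A ∩ B) ∪ C)) := by
  have cu : ∀ X Y : Set α, c (X ∪ Y) = c (c X ∪ c Y) := by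
    intro X Y
    apply Set.Subset.antisymm
    · exact cmono _ _ (Set.union_subset_union (cext X) (cext Y))
    · have h1 : c X ∪ c Y ⊆ c (X ∪ Y) :=
        Set.union_subset (cmono _ _ Set.subset_union_left)
          (cmono _ _ Set.subset_union_right)
      have := cmono _ _ h1
      rwa [cidem] at this
  constructor
  · intro h A B C hA hB hC
    have hAB : c (A ∩ B) = A ∩ B := by
      apply Set.Subset.antisymm
      · intro x hx
        constructor
        · have := cmono (A ∩ B) A Set.inter_subset_left
          rw [hA] at this; exact this hx
        · have := cmono (A ∩ B) B Set.inter_subset_right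
          rw [hB] at this; exact this hx
      · exact cext _
    have h1 : aInd c A (A ∩ B) B := by
      unfold aInd
      have e1 : A ∪ (A ∩ B) = A := by ext x; simp only [Set.mem_union, Set.mem_inter_iff]; tauto
      have e2 : B ∪ (A ∩ B) = B := by ext x; simp only [Set.mem_union, Set.mem_inter_iff]; tauto
      rw [e1, e2, hA, hB, hAB]
    have h2 := h A B (A ∩ B) ((A ∩ B) ∪ C) h1 Set.subset_union_left
    unfold aInd at h2
    have e1 : A ∪ ((A ∩ B) ∪ C) = A ∪ C := by ext x; simp only [Set.mem_union, Set.mem_inter_iff]; tauto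
    have e2 : B ∪ ((A ∩ B) ∪ C) = B ∪ C := by ext x; simp only [Set.mem_union, Set.mem_inter_iff]; tauto
    rw [e1, e2] at h2
    exact h2
  · intro h A B C C' hind hsub
    unfold aInd at hind ⊢
    have key := h (c (A ∪ C)) (c (B ∪ C)) (c C') (cidem _) (cidem _) (cidem _)
    rw [hind] at key
    have hCC : c C ∪ c C' = c C' :=
      Set.union_eq_self_of_subset_left (cmono _ _ hsub)
    rw [hCC] at key
    have eA : A ∪ C' = (A ∪ C) ∪ C' := by
      rw [Set.union_assoc, Set.union_eq_self_of_subset_left hsub]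
    have eB : B ∪ C' = (B ∪ C) ∪ C' := by
      rw [Set.union_assoc, Set.union_eq_self_of_subset_left hsub]
    calc c (A ∪ C') ∩ c (B ∪ C')
        = c (c (A ∪ C) ∪ c C') ∩ c (c (B ∪ C) ∪ c C') := by
          rw [eA, eB, ← cu, ← cu]
      _ = c (c C') := key
      _ = c C' := cidem _
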